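/- arXiv:2010.06317 — 2 statements merged into one kernel-verified Lean document; each statement's English description precedes it below -/
import Mathlib

section
/- Let D be a digraph with feedback vertex set F = {v_1,...,v_k} and let c be a k-coloring of the subdigraph induced by the closed neighborhood N[F] with c(v_i) = i. If for some i the set of vertices in N[F] \ F colored i having an arc into v_i is empty, or the set of those having an arc from v_i is empty, then extending c by coloring all of V(D) \ N[F] with color i yields a proper k-coloring of D. -/
/-- The subdigraph of the digraph with arc relation `A` induced by the vertex set `S`
is acyclic (contains no directed cycle). -/
def AcyclicOn {V : Type*} (A : V → V → Prop) (S : Set V) : Prop :=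
  ∀ v ∈ S, ¬ Relation.TransGen (fun x y => x ∈ S ∧ y ∈ S ∧ A x y) v v

/-- The digraph with arc relation `A` is `k`-colorable: its vertices can be colored with
`k` colors so that every color class induces an acyclic subdigraph. -/
def DiColorable {V : Type*} (A : V → V → Prop) (k : ℕ) : Prop :=
  ∃ c : V → Fin k, ∀ i : Fin k, AcyclicOn A {v | c v = i}

/-- The subdigraph induced by `S` is `k`-colorable. -/
def DiColorableOn {V : Type*} (A : V → V → Prop) (S : Set V) (k : ℕ) : Prop :=
  ∃ c : V → Fin k, ∀ i : Fin k, AcyclicOn A (S ∩ {v | c v = i})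

/-- The closed neighborhood `N[S]` of a set `S` of vertices in a digraph: `S` together
with all vertices having an arc to or from a vertex of `S`. -/
def ClosedNbhd {V : Type*} (A : V → V → Prop) (S : Set V) : Set V :=
  S ∪ {v | ∃ u ∈ S, A u v ∨ A v u}

/-- `V_{i,in}`: vertices of `N[F] \ F` colored `i` having an arc into `v_i = F i`. -/
def VinSet {V : Type*} {k : ℕ} (A : V → V → Prop) (F : Fin k → V)
    (c : V → Fin k) (i : Fin k) : Set V :=
  {v | v ∈ ClosedNbhd A (Set.range F) \ Set.range F ∧ c v = i ∧ A v (F i)}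

/-- `V_{i,out}`: vertices of `N[F] \ F` colored `i` having an arc from `v_i = F i`. -/
def VoutSet {V : Type*} {k : ℕ} (A : V → V → Prop) (F : Fin k → V)
    (c : V → Fin k) (i : Fin k) : Set V :=
  {v | v ∈ ClosedNbhd A (Set.range F) \ Set.range F ∧ c v = i ∧ A (F i) v}

/-- Auxiliary: every `TransGen` path either avoids `w` entirely or passes through `w`. -/
lemma transGen_avoid {V : Type*} (r : V → V → Prop) (w : V) :
    ∀ a b : V, Relation.TransGen r a b →
      Relation.TransGen (fun x y => r x y ∧ x ≠ w ∧ y ≠ w) a b ∨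
      (Relation.ReflTransGen r a w ∧ Relation.ReflTransGen r w b) := by
  intro a b h
  induction h with
  | single hab =>
    rename_i b
    by_cases ha : a = w
    · exact Or.inr ⟨ha ▸ Relation.ReflTransGen.refl, ha ▸ Relation.ReflTransGen.single hab⟩
    by_cases hb : b = w
    · exact Or.inr ⟨hb ▸ Relation.ReflTransGen.single hab, hb ▸ Relation.ReflTransGen.refl⟩
    · exact Or.inl (Relation.TransGen.single ⟨hab, ha, hb⟩)
  | tail hab hbc ih =>
    rename_i b cc
    rcases ih with htg | ⟨h1, h2⟩
    · obtain ⟨x, -, hx⟩ := Relation.TransGen.tail'_iff.mp htg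
      by_cases hc : cc = w
      · exact Or.inr ⟨hc ▸ Relation.ReflTransGen.tail
          (Relation.TransGen.mono (fun _ _ h => h.1) _ _ htg).to_reflTransGen hbc, hc ▸ Relation.ReflTransGen.refl⟩
      · exact Or.inl (htg.tail ⟨hbc, hx.2.2, hc⟩)
    · exact Or.inr ⟨h1, h2.tail hbc⟩

/-- Claim 6 of the paper: if for some `i` the set `V_{i,in}` or `V_{i,out}` is empty,
then extending the coloring `c` of `D[N[F]]` by giving all vertices outside `N[F]`
color `i` yields a proper `k`-coloring of `D`. -/
theorem stmt9 {V : Type*} (A : V → V → Prop) (k : ℕ) (F : Fin k → V)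
    (hFinj : Function.Injective F)
    (hfvs : AcyclicOn A (Set.range F)ᶜ)
    (c : V → Fin k) (hcF : ∀ i, c (F i) = i)
    (hcol : ∀ j : Fin k, AcyclicOn A (ClosedNbhd A (Set.range F) ∩ {v | c v = j}))
    (i : Fin k)
    (hempty : VinSet A F c i = ∅ ∨ VoutSet A F c i = ∅)
    (c' : V → Fin k)
    (hc'in : ∀ v ∈ ClosedNbhd A (Set.range F), c' v = c v)
    (hc'out : ∀ v ∉ ClosedNbhd A (Set.range F), c' v = i) :
    ∀ j : Fin k, AcyclicOn A {v | c' v = j} := by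
  intro j v hv hcyc
  set N : Set V := ClosedNbhd A (Set.range F) with hN
  have hwN : F i ∈ N := Or.inl (Set.mem_range_self i)
  by_cases hji : j = i
  case neg =>
    -- color class j sits entirely inside N[F], colored j by c
    have hsub : ∀ x, c' x = j → x ∈ N ∧ c x = j := by
      intro x hx
      by_cases hxN : x ∈ N
      · exact ⟨hxN, (hc'in x hxN) ▸ hx⟩
      · exact absurd ((hc'out x hxN) ▸ hx : (i : Fin k) = j) (fun h => hji h.symm)
    refine hcol j v ⟨(hsub v hv).1, (hsub v hv).2⟩ (Relation.TransGen.mono ?_ _ _ hcyc)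
    rintro x y ⟨hx, hy, ha⟩
    exact ⟨⟨(hsub x hx).1, (hsub x hx).2⟩, ⟨(hsub y hy).1, (hsub y hy).2⟩, ha⟩
  case pos =>
    subst hji
    set w : V := F j with hw
    set r : V → V → Prop := fun x y => x ∈ {v | c' v = j} ∧ y ∈ {v | c' v = j} ∧ A x y with hr
    -- no cycle through w = F j
    have key : ¬ Relation.TransGen r w w := by
      intro hww
      -- the self-loop case: arc F j → F j
      have hloop : ¬ A w w := by
        intro ha
        exact hcol j w ⟨hwN, hcF j⟩
          (Relation.TransGen.single ⟨⟨hwN, hcF j⟩, ⟨hwN, hcF j⟩, ha⟩)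
      obtain ⟨x1, ⟨-, hx1, hA1⟩, -⟩ := Relation.TransGen.head'_iff.mp hww
      obtain ⟨xm, -, hxm, -, hAm⟩ := Relation.TransGen.tail'_iff.mp hww
      have hx1N : x1 ∈ N := Or.inr ⟨F j, Set.mem_range_self j, Or.inl hA1⟩
      have hxmN : xm ∈ N := Or.inr ⟨F j, Set.mem_range_self j, Or.inr hAm⟩
      have hcx1 : c x1 = j := (hc'in x1 hx1N) ▸ hx1
      have hcxm : c xm = j := (hc'in xm hxmN) ▸ hxm
      have hx1F : x1 ∉ Set.range F := by
        rintro ⟨m, hm⟩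
        have hmi : m = j := by rw [← hcF m, hm, hcx1]
        have hxw : x1 = w := by rw [hw, ← hmi, hm]
        exact hloop (hxw ▸ hA1)
      have hxmF : xm ∉ Set.range F := by
        rintro ⟨m, hm⟩
        have hmi : m = j := by rw [← hcF m, hm, hcxm]
        have hxw : xm = w := by rw [hw, ← hmi, hm]
        exact hloop (hxw ▸ hAm)
      rcases hempty with h | h
      · have : xm ∈ VinSet A F c j := ⟨⟨hxmN, hxmF⟩, hcxm, hAm⟩
        rw [h] at this; exact this
      · have : x1 ∈ VoutSet A F c j := ⟨⟨hx1N, hx1F⟩, hcx1, hA1⟩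
        rw [h] at this; exact this
    rcases transGen_avoid r w v v hcyc with htg | ⟨h1, h2⟩
    · -- cycle avoiding w: lies entirely outside range F, contradicting hfvs
      have hout : ∀ x, c' x = j → x ≠ w → x ∉ Set.range F := by
        rintro x hx hxw ⟨m, hm⟩
        have hxN : x ∈ N := Or.inl ⟨m, hm⟩
        have : m = j := by rw [← hcF m, hm, ← hc'in x hxN, hx]
        exact hxw (by rw [hw, ← this, hm])
      obtain ⟨z, ⟨⟨hvj, -, -⟩, hvw, -⟩, -⟩ := Relation.TransGen.head'_iff.mp htg
      refine hfvs v (hout v hvj hvw) (Relation.TransGen.mono ?_ _ _ htg)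
      rintro x y ⟨⟨hx, hy, ha⟩, hxw, hyw⟩
      exact ⟨hout x hx hxw, hout y hy hyw, ha⟩
    · -- cycle passing through w
      by_cases hvw : v = w
      · exact key (hvw ▸ hcyc)
      · rcases h1.cases_head with heq | ⟨z, hvz, hzw⟩
        · exact hvw heq
        · exact key (Relation.TransGen.trans_right h2 (Relation.TransGen.head' hvz hzw))
end

section
/- Let D be a digraph of maximum degree at most 4k-3 with feedback vertex set F = {v_1,...,v_k} inducing a bi-directed clique, and suppose the 2k sets V_{i,in}, V_{i,out} (defined from a proper k-coloring c of D[N[F]] with c(v_i)=i) are all nonempty. Then there exist indices i < j such that the number of arcs between {v_i, v_j} and V_{i,in} ∪ V_{i,out} ∪ V_{j,in} ∪ V_{j,out} whose endpoints have distinct colors is at most 3. -/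
/-- The set `E_{i,j}` of cross arcs for the pair `(i, j)`: arcs with one endpoint in
`{v_i, v_j}` and the other in `V_{i,in} ∪ V_{i,out} ∪ V_{j,in} ∪ V_{j,out}`, whose
endpoints have distinct colors. -/
def CrossArcs {V : Type*} {k : ℕ} (A : V → V → Prop) (F : Fin k → V)
    (c : V → Fin k) (i j : Fin k) : Set (V × V) :=
  {e | A e.1 e.2 ∧ c e.1 ≠ c e.2 ∧
    ((e.1 ∈ ({F i, F j} : Set V) ∧
       e.2 ∈ VinSet A F c i ∪ VoutSet A F c i ∪ VinSet A F c j ∪ VoutSet A F c j) ∨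
     (e.2 ∈ ({F i, F j} : Set V) ∧
       e.1 ∈ VinSet A F c i ∪ VoutSet A F c i ∪ VinSet A F c j ∪ VoutSet A F c j))}

open Classical in
/-- Cross out-neighbors of `F i` outside `F` colored differently from `i`. -/
noncomputable def myO3 {V : Type*} [Fintype V] {k : ℕ} (A : V → V → Prop) (F : Fin k → V)
    (c : V → Fin k) (i : Fin k) : Finset V :=
  Finset.univ.filter fun w => A (F i) w ∧ w ∉ Set.range F ∧ c w ≠ i ∧
    w ∈ VinSet A F c (c w) ∪ VoutSet A F c (c w)

open Classical in
noncomputable def myI3 {V : Type*} [Fintype V] {k : ℕ} (A : V → V → Prop) (F : Fin k → V)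
    (c : V → Fin k) (i : Fin k) : Finset V :=
  Finset.univ.filter fun w => A w (F i) ∧ w ∉ Set.range F ∧ c w ≠ i ∧
    w ∈ VinSet A F c (c w) ∪ VoutSet A F c (c w)

open Classical in
noncomputable def myp {V : Type*} [Fintype V] {k : ℕ} (A : V → V → Prop) (F : Fin k → V)
    (c : V → Fin k) (i m : Fin k) : ℕ :=
  ((myO3 A F c i).filter fun w => c w = m).card + ((myI3 A F c i).filter fun w => c w = m).card

lemma mem_myO3 {V : Type*} [Fintype V] {k : ℕ} {A : V → V → Prop} {F : Fin k → V}
    {c : V → Fin k} {i : Fin k} {w : V} :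
    w ∈ myO3 A F c i ↔ (A (F i) w ∧ w ∉ Set.range F ∧ c w ≠ i ∧
      w ∈ VinSet A F c (c w) ∪ VoutSet A F c (c w)) := by
  simp [myO3]

lemma mem_myI3 {V : Type*} [Fintype V] {k : ℕ} {A : V → V → Prop} {F : Fin k → V}
    {c : V → Fin k} {i : Fin k} {w : V} :
    w ∈ myI3 A F c i ↔ (A w (F i) ∧ w ∉ Set.range F ∧ c w ≠ i ∧
      w ∈ VinSet A F c (c w) ∪ VoutSet A F c (c w)) := by
  simp [myI3]
/-- If the digraph has maximum degree at most `4k - 3`, `F` is a feedback vertex set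
inducing a bi-directed clique, `c` is a proper `k`-coloring of `D[N[F]]` with
`c(v_i) = i`, and all the sets `V_{i,in}, V_{i,out}` are nonempty, then there are
indices `i < j` with at most `3` cross arcs. -/
theorem stmt11 {V : Type*} [Fintype V] (A : V → V → Prop) (k : ℕ) (hk : 2 ≤ k)
    (F : Fin k → V) (hFinj : Function.Injective F)
    (hclique : ∀ i j : Fin k, i ≠ j → A (F i) (F j))
    (hfvs : AcyclicOn A (Set.range F)ᶜ)
    (hdeg : ∀ v : V, {u | A v u}.ncard + {u | A u v}.ncard ≤ 4 * k - 3)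
    (c : V → Fin k) (hcF : ∀ i, c (F i) = i)
    (hcol : ∀ j : Fin k, AcyclicOn A (ClosedNbhd A (Set.range F) ∩ {v | c v = j}))
    (hne : ∀ i : Fin k, (VinSet A F c i).Nonempty ∧ (VoutSet A F c i).Nonempty) :
    ∃ i j : Fin k, i < j ∧ (CrossArcs A F c i j).ncard ≤ 3 := by
  classical
  by_contra hcon
  push_neg at hcon
  -- hcon : ∀ i j, i < j → 3 < (CrossArcs A F c i j).ncard
  have hVmem : ∀ m w, w ∈ VinSet A F c m ∪ VoutSet A F c m →
      c w = m ∧ w ∉ Set.range F ∧ w ∈ VinSet A F c (c w) ∪ VoutSet A F c (c w) := by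
    intro m w hw
    rcases hw with h | h
    · exact ⟨h.2.1, h.1.2, by rw [h.2.1]; exact Or.inl h⟩
    · exact ⟨h.2.1, h.1.2, by rw [h.2.1]; exact Or.inr h⟩
  -- L1 : degree lower bound at each F i
  have L1 : ∀ i : Fin k, 2 * k + ∑ m, myp A F c i m ≤
      {u | A (F i) u}.ncard + {u | A u (F i)}.ncard := by
    intro i
    obtain ⟨win, hwin⟩ := (hne i).1
    obtain ⟨wout, hwout⟩ := (hne i).2
    have hwinF : win ∉ Set.range F := hwin.1.2
    have hwoutF : wout ∉ Set.range F := hwout.1.2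
    have himg : ((Finset.univ.erase i).image F).card = k - 1 := by
      rw [Finset.card_image_of_injective _ hFinj, Finset.card_erase_of_mem (Finset.mem_univ i),
        Finset.card_univ, Fintype.card_fin]
    have hFimg : ∀ u, u ∈ (Finset.univ.erase i).image F → u ∈ Set.range F := by
      intro u hu
      obtain ⟨j, -, rfl⟩ := Finset.mem_image.mp hu
      exact ⟨j, rfl⟩
    -- out part
    have hout : k - 1 + 1 + (myO3 A F c i).card ≤ {u | A (F i) u}.ncard := by
      have hset : {u | A (F i) u} = ↑(Finset.univ.filter fun u => A (F i) u) := by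
        ext u; simp
      rw [hset, Set.ncard_coe_finset]
      have hsub : (((Finset.univ.erase i).image F) ∪ {wout}) ∪ myO3 A F c i ⊆
          Finset.univ.filter fun u => A (F i) u := by
        intro u hu
        rcases Finset.mem_union.mp hu with hu | hu
        · rcases Finset.mem_union.mp hu with hu | hu
          · obtain ⟨j, hj, rfl⟩ := Finset.mem_image.mp hu
            exact Finset.mem_filter.mpr ⟨Finset.mem_univ _,
              hclique i j (Ne.symm (Finset.ne_of_mem_erase hj))⟩
          · rw [Finset.mem_singleton.mp hu]
            exact Finset.mem_filter.mpr ⟨Finset.mem_univ _, hwout.2.2⟩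
        · exact Finset.mem_filter.mpr ⟨Finset.mem_univ _, (mem_myO3.mp hu).1⟩
      have hd1 : Disjoint ((Finset.univ.erase i).image F) ({wout} : Finset V) := by
        rw [Finset.disjoint_singleton_right]
        intro hmem; exact hwoutF (hFimg _ hmem)
      have hd2 : Disjoint (((Finset.univ.erase i).image F) ∪ {wout}) (myO3 A F c i) := by
        rw [Finset.disjoint_left]
        intro u hu hu2
        obtain ⟨-, huF, hcu, -⟩ := mem_myO3.mp hu2
        rcases Finset.mem_union.mp hu with hu | hu
        · exact huF (hFimg _ hu)
        · rw [Finset.mem_singleton.mp hu] at hcu; exact hcu hwout.2.1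
      calc k - 1 + 1 + (myO3 A F c i).card
          = ((((Finset.univ.erase i).image F) ∪ {wout}) ∪ myO3 A F c i).card := by
            rw [Finset.card_union_of_disjoint hd2, Finset.card_union_of_disjoint hd1,
              himg, Finset.card_singleton]
        _ ≤ _ := Finset.card_le_card hsub
    -- in part
    have hin : k - 1 + 1 + (myI3 A F c i).card ≤ {u | A u (F i)}.ncard := by
      have hset : {u | A u (F i)} = ↑(Finset.univ.filter fun u => A u (F i)) := by
        ext u; simp
      rw [hset, Set.ncard_coe_finset]
      have hsub : (((Finset.univ.erase i).image F) ∪ {win}) ∪ myI3 A F c i ⊆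
          Finset.univ.filter fun u => A u (F i) := by
        intro u hu
        rcases Finset.mem_union.mp hu with hu | hu
        · rcases Finset.mem_union.mp hu with hu | hu
          · obtain ⟨j, hj, rfl⟩ := Finset.mem_image.mp hu
            exact Finset.mem_filter.mpr ⟨Finset.mem_univ _,
              hclique j i (Finset.ne_of_mem_erase hj)⟩
          · rw [Finset.mem_singleton.mp hu]
            exact Finset.mem_filter.mpr ⟨Finset.mem_univ _, hwin.2.2⟩
        · exact Finset.mem_filter.mpr ⟨Finset.mem_univ _, (mem_myI3.mp hu).1⟩
      have hd1 : Disjoint ((Finset.univ.erase i).image F) ({win} : Finset V) := by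
        rw [Finset.disjoint_singleton_right]
        intro hmem; exact hwinF (hFimg _ hmem)
      have hd2 : Disjoint (((Finset.univ.erase i).image F) ∪ {win}) (myI3 A F c i) := by
        rw [Finset.disjoint_left]
        intro u hu hu2
        obtain ⟨-, huF, hcu, -⟩ := mem_myI3.mp hu2
        rcases Finset.mem_union.mp hu with hu | hu
        · exact huF (hFimg _ hu)
        · rw [Finset.mem_singleton.mp hu] at hcu; exact hcu hwin.2.1
      calc k - 1 + 1 + (myI3 A F c i).card
          = ((((Finset.univ.erase i).image F) ∪ {win}) ∪ myI3 A F c i).card := by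
            rw [Finset.card_union_of_disjoint hd2, Finset.card_union_of_disjoint hd1,
              himg, Finset.card_singleton]
        _ ≤ _ := Finset.card_le_card hsub
    have hOfib : (myO3 A F c i).card = ∑ m, ((myO3 A F c i).filter fun w => c w = m).card :=
      Finset.card_eq_sum_card_fiberwise (fun x _ => Finset.mem_univ (c x))
    have hIfib : (myI3 A F c i).card = ∑ m, ((myI3 A F c i).filter fun w => c w = m).card :=
      Finset.card_eq_sum_card_fiberwise (fun x _ => Finset.mem_univ (c x))
    have hpsum : ∑ m, myp A F c i m = (myO3 A F c i).card + (myI3 A F c i).card := by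
      rw [hOfib, hIfib, ← Finset.sum_add_distrib]; rfl
    omega
  -- L2 : cross arcs bounded by fibers
  have L2 : ∀ i j : Fin k, i ≠ j →
      (CrossArcs A F c i j).ncard ≤ myp A F c i j + myp A F c j i := by
    intro i j hij
    have hcoe : CrossArcs A F c i j =
        ↑(Finset.univ.filter fun e : V × V => e ∈ CrossArcs A F c i j) := by
      ext e; simp
    rw [hcoe, Set.ncard_coe_finset]
    have hU : ∀ w, w ∈ VinSet A F c i ∪ VoutSet A F c i ∪ VinSet A F c j ∪ VoutSet A F c j →
        (c w = i ∨ c w = j) ∧ w ∉ Set.range F ∧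
          w ∈ VinSet A F c (c w) ∪ VoutSet A F c (c w) := by
      intro w hw
      rcases hw with ((h | h) | h) | h
      · have := hVmem i w (Or.inl h); exact ⟨Or.inl this.1, this.2⟩
      · have := hVmem i w (Or.inr h); exact ⟨Or.inl this.1, this.2⟩
      · have := hVmem j w (Or.inl h); exact ⟨Or.inr this.1, this.2⟩
      · have := hVmem j w (Or.inr h); exact ⟨Or.inr this.1, this.2⟩
    have hsub : (Finset.univ.filter fun e : V × V => e ∈ CrossArcs A F c i j) ⊆
        ((((myO3 A F c i).filter fun w => c w = j).image (fun w => (F i, w)) ∪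
          ((myI3 A F c i).filter fun w => c w = j).image (fun w => (w, F i))) ∪
         (((myO3 A F c j).filter fun w => c w = i).image (fun w => (F j, w)) ∪
          ((myI3 A F c j).filter fun w => c w = i).image (fun w => (w, F j)))) := by
      rintro ⟨x, y⟩ he
      obtain ⟨-, he⟩ := Finset.mem_filter.mp he
      obtain ⟨hA1, hcc, hcase⟩ := he
      rcases hcase with ⟨hx, hy⟩ | ⟨hy, hx⟩
      · obtain ⟨hcy, hyF, hyV⟩ := hU y hy
        rcases hx with rfl | rfl
        · have hcyj : c y = j := hcy.resolve_left (fun h => hcc ((hcF i).trans h.symm))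
          refine Finset.mem_union_left _ (Finset.mem_union_left _
            (Finset.mem_image_of_mem _ ?_))
          exact Finset.mem_filter.mpr ⟨mem_myO3.mpr ⟨hA1, hyF,
            by rw [hcyj]; exact Ne.symm hij, hyV⟩, hcyj⟩
        · have hcyi : c y = i := hcy.resolve_right (fun h => hcc ((hcF j).trans h.symm))
          refine Finset.mem_union_right _ (Finset.mem_union_left _
            (Finset.mem_image_of_mem _ ?_))
          exact Finset.mem_filter.mpr ⟨mem_myO3.mpr ⟨hA1, hyF,
            by rw [hcyi]; exact hij, hyV⟩, hcyi⟩
      · obtain ⟨hcx, hxF, hxV⟩ := hU x hx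
        rcases hy with rfl | rfl
        · have hcxj : c x = j := hcx.resolve_left (fun h => hcc (h.trans (hcF i).symm))
          refine Finset.mem_union_left _ (Finset.mem_union_right _
            (Finset.mem_image_of_mem _ ?_))
          exact Finset.mem_filter.mpr ⟨mem_myI3.mpr ⟨hA1, hxF,
            by rw [hcxj]; exact Ne.symm hij, hxV⟩, hcxj⟩
        · have hcxi : c x = i := hcx.resolve_right (fun h => hcc (h.trans (hcF j).symm))
          refine Finset.mem_union_right _ (Finset.mem_union_right _
            (Finset.mem_image_of_mem _ ?_))
          exact Finset.mem_filter.mpr ⟨mem_myI3.mpr ⟨hA1, hxF,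
            by rw [hcxi]; exact hij, hxV⟩, hcxi⟩
    calc (Finset.univ.filter fun e : V × V => e ∈ CrossArcs A F c i j).card
        ≤ _ := Finset.card_le_card hsub
      _ ≤ (((myO3 A F c i).filter fun w => c w = j).image (fun w => (F i, w)) ∪
            ((myI3 A F c i).filter fun w => c w = j).image (fun w => (w, F i))).card +
          ((((myO3 A F c j).filter fun w => c w = i).image (fun w => (F j, w)) ∪
            ((myI3 A F c j).filter fun w => c w = i).image (fun w => (w, F j)))).card :=
          Finset.card_union_le _ _
      _ ≤ ((((myO3 A F c i).filter fun w => c w = j).image (fun w => (F i, w))).card +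
            (((myI3 A F c i).filter fun w => c w = j).image (fun w => (w, F i))).card) +
          (((((myO3 A F c j).filter fun w => c w = i).image (fun w => (F j, w))).card +
            ((((myI3 A F c j).filter fun w => c w = i).image (fun w => (w, F j))).card))) :=
          add_le_add (Finset.card_union_le _ _) (Finset.card_union_le _ _)
      _ ≤ myp A F c i j + myp A F c j i := by
          unfold myp
          exact add_le_add (add_le_add Finset.card_image_le Finset.card_image_le)
            (add_le_add Finset.card_image_le Finset.card_image_le)
  have key : ∀ i j : Fin k, i ≠ j → 4 ≤ myp A F c i j + myp A F c j i := by
    intro i j hij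
    rcases hij.lt_or_gt with h | h
    · have h1 := hcon i j h
      have h2 := L2 i j hij
      omega
    · have h1 := hcon j i h
      have h2 := L2 j i hij.symm
      omega
  -- summation
  have hsum1 : ∀ i : Fin k, 4 * (k - 1) ≤ ∑ j, (myp A F c i j + myp A F c j i) := by
    intro i
    calc 4 * (k - 1) = ∑ _j ∈ Finset.univ.erase i, 4 := by
          rw [Finset.sum_const, Finset.card_erase_of_mem (Finset.mem_univ i),
            Finset.card_univ, Fintype.card_fin, smul_eq_mul, mul_comm]
      _ ≤ ∑ j ∈ Finset.univ.erase i, (myp A F c i j + myp A F c j i) :=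
          Finset.sum_le_sum (fun j hj => key i j (Ne.symm (Finset.ne_of_mem_erase hj)))
      _ ≤ ∑ j, (myp A F c i j + myp A F c j i) :=
          Finset.sum_le_sum_of_subset (Finset.subset_univ _)
  have hsum2 : k * (4 * (k - 1)) ≤ 2 * ∑ i, ∑ m, myp A F c i m := by
    have h1 : ∑ i : Fin k, ∑ j, (myp A F c i j + myp A F c j i) =
        (∑ i, ∑ j, myp A F c i j) + (∑ i, ∑ j, myp A F c j i) := by
      simp [Finset.sum_add_distrib]
    have h2 : (∑ i : Fin k, ∑ j, myp A F c j i) = ∑ i, ∑ j, myp A F c i j :=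
      Finset.sum_comm
    have h3 : k * (4 * (k - 1)) ≤ ∑ i : Fin k, ∑ j, (myp A F c i j + myp A F c j i) := by
      calc k * (4 * (k - 1)) = ∑ _i : Fin k, 4 * (k - 1) := by
            rw [Finset.sum_const, Finset.card_univ, Fintype.card_fin, smul_eq_mul]
        _ ≤ _ := Finset.sum_le_sum (fun i _ => hsum1 i)
    rw [h1, h2] at h3
    calc k * (4 * (k - 1)) ≤ _ := h3
      _ = 2 * ∑ i, ∑ m, myp A F c i m := by ring
  -- total degree bounds
  have hlow : k * (2 * k) + ∑ i, ∑ m, myp A F c i m ≤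
      ∑ i : Fin k, ({u | A (F i) u}.ncard + {u | A u (F i)}.ncard) := by
    calc k * (2 * k) + ∑ i, ∑ m, myp A F c i m
        = ∑ i : Fin k, (2 * k + ∑ m, myp A F c i m) := by
          rw [Finset.sum_add_distrib, Finset.sum_const, Finset.card_univ,
            Fintype.card_fin, smul_eq_mul]
      _ ≤ _ := Finset.sum_le_sum fun i _ => L1 i
  have hup : ∑ i : Fin k, ({u | A (F i) u}.ncard + {u | A u (F i)}.ncard) ≤ k * (4 * k - 3) := by
    calc ∑ i : Fin k, ({u | A (F i) u}.ncard + {u | A u (F i)}.ncard)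
        ≤ ∑ _i : Fin k, (4 * k - 3) := Finset.sum_le_sum fun i _ => hdeg (F i)
      _ = k * (4 * k - 3) := by
          rw [Finset.sum_const, Finset.card_univ, Fintype.card_fin, smul_eq_mul]
  have hfin : k * (2 * k) + ∑ i, ∑ m, myp A F c i m ≤ k * (4 * k - 3) := le_trans hlow hup
  have hk1 : (1 : ℕ) ≤ k := by omega
  have h34 : (3 : ℕ) ≤ 4 * k := by omega
  zify [hk1, h34] at hsum2 hfin
  have hkZ : (2 : ℤ) ≤ (k : ℤ) := by exact_mod_cast hk
  nlinarith [hsum2, hfin, hkZ]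
end
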